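/- Any automorphism of a direct product of finitely many indecomposable finite groups permutes the commutator subgroups of the factors: if G = G₁ × ⋯ × Gₙ with each Gᵢ indecomposable, and φ ∈ Aut(G), then there is a permutation σ of {1,…,n} with φ([Gᵢ,Gᵢ]) = [G_{σ(i)}, G_{σ(i)}] for each i. -/

import Mathlib

open Function
open scoped commutatorElement

private lemma conj_mulSingle {n : ℕ} {G : Fin n → Type*} [∀ i, Group (G i)]
    (w : ∀ i, G i) (i : Fin n) (z : G i) :
    w * Pi.mulSingle i z * w⁻¹ = Pi.mulSingle i (w i * z * (w i)⁻¹) := by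
  funext j
  rcases eq_or_ne j i with rfl | hj
  · simp
  · simp [Pi.mulSingle_eq_of_ne hj]

/-- Fitting's lemma for finite indecomposable groups: a normal endomorphism is
nilpotent or bijective. -/
private lemma fitting {A : Type*} [Group A] [Finite A]
    (hind : ∀ H K : Subgroup A, H.Normal → K.Normal → H ⊓ K = ⊥ → H ⊔ K = ⊤ → H = ⊥ ∨ K = ⊥)
    (f : A →* A) (hf : ∀ x y, f (y * x * y⁻¹) = y * f x * y⁻¹) :
    (∃ m, ∀ x, (⇑f)^[m] x = 1) ∨ Function.Bijective f := by
  obtain ⟨a, b, hab, hfab⟩ : ∃ a b : ℕ, a < b ∧ (⇑f)^[a] = (⇑f)^[b] := by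
    obtain ⟨x, y, hxy, h⟩ := Finite.exists_ne_map_eq_of_infinite (fun m : ℕ => (⇑f)^[m])
    rcases hxy.lt_or_gt with h' | h'
    · exact ⟨x, y, h', h⟩
    · exact ⟨y, x, h', h.symm⟩
  rcases Nat.eq_zero_or_pos a with rfl | ha
  · -- f^[b] = id, so f is bijective
    refine Or.inr ((Finite.surjective_iff_bijective).mp fun x => ⟨(⇑f)^[b-1] x, ?_⟩)
    have hb : b - 1 + 1 = b := Nat.succ_pred_eq_of_pos hab
    have h1 : (⇑f)^[b-1+1] x = x := by rw [hb, ← hfab]; rfl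
    rw [Function.iterate_succ_apply'] at h1
    exact h1
  · set t := b - a with htdef
    have ht : 1 ≤ t := by omega
    have hb : b = a + t := by omega
    have step : ∀ u, a ≤ u → (⇑f)^[u + t] = (⇑f)^[u] := by
      intro u hu
      have h1 : u + t = (u - a) + b := by omega
      have h2 : (u - a) + a = u := by omega
      rw [h1, Function.iterate_add, ← hfab, ← Function.iterate_add, h2]
    have rep : ∀ c u, a ≤ u → (⇑f)^[u + c * t] = (⇑f)^[u] := by
      intro c
      induction c with
      | zero => simp
      | succ c ih =>
        intro u hu
        have h1 : u + (c+1) * t = (u + c * t) + t := by ring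
        rw [h1, step _ (by omega), ih u hu]
    set m := a * t with hmdef
    have hm1 : 1 ≤ m := Nat.one_le_iff_ne_zero.mpr (by positivity)
    have hma : a ≤ m := Nat.le_mul_of_pos_right a ht
    have h2m : (⇑f)^[m + m] = (⇑f)^[m] := by
      have := rep a m hma
      rwa [← hmdef] at this
    set F := (⇑f)^[m] with hFdef
    have Fidem : ∀ x, F (F x) = F x := by
      intro x
      rw [hFdef, ← Function.iterate_add_apply]
      exact congrFun h2m x
    have hFmul : ∀ x y : A, F (x * y) = F x * F y := by
      have : ∀ q (x y : A), (⇑f)^[q] (x * y) = (⇑f)^[q] x * (⇑f)^[q] y := by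
        intro q
        induction q with
        | zero => simp
        | succ q ih =>
          intro x y
          simp only [Function.iterate_succ_apply', ih, map_mul]
      exact this m
    have hFone : F 1 = 1 := Function.iterate_fixed (map_one f) m
    have hFinv : ∀ x : A, F x⁻¹ = (F x)⁻¹ := by
      intro x
      have : F x⁻¹ * F x = 1 := by rw [← hFmul, inv_mul_cancel, hFone]
      exact eq_inv_of_mul_eq_one_left this
    have hFconj : ∀ x y : A, F (y * x * y⁻¹) = y * F x * y⁻¹ := by
      have : ∀ q (x y : A), (⇑f)^[q] (y * x * y⁻¹) = y * (⇑f)^[q] x * y⁻¹ := by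
        intro q
        induction q with
        | zero => simp
        | succ q ih =>
          intro x y
          simp only [Function.iterate_succ_apply', ih, hf]
      exact this m
    set R : Subgroup A :=
      { carrier := Set.range F
        one_mem' := ⟨1, hFone⟩
        mul_mem' := by rintro x y ⟨c, rfl⟩ ⟨d, rfl⟩; exact ⟨c * d, hFmul c d⟩
        inv_mem' := by rintro x ⟨c, rfl⟩; exact ⟨c⁻¹, hFinv c⟩ } with hRdef
    set K : Subgroup A :=
      { carrier := {x | F x = 1}
        one_mem' := hFone
        mul_mem' := by
          intro x y hx hy
          simp only [Set.mem_setOf_eq] at *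
          rw [hFmul, hx, hy, mul_one]
        inv_mem' := by
          intro x hx
          simp only [Set.mem_setOf_eq] at *
          rw [hFinv, hx, inv_one] } with hKdef
    have Rn : R.Normal := by
      constructor
      rintro x ⟨c, rfl⟩ g
      exact ⟨g * c * g⁻¹, hFconj c g⟩
    have Kn : K.Normal := by
      constructor
      intro x hx g
      have hx' : F x = 1 := hx
      show F (g * x * g⁻¹) = 1
      rw [hFconj, hx', mul_one, mul_inv_cancel]
    have hinf : R ⊓ K = ⊥ := by
      refine le_antisymm ?_ bot_le
      rintro x ⟨⟨c, rfl⟩, hk⟩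
      have hk' : F (F c) = 1 := hk
      rw [Fidem] at hk'
      simpa [Subgroup.mem_bot] using hk'
    have hsup : R ⊔ K = ⊤ := by
      rw [eq_top_iff]
      intro x _
      have hxk : (F x)⁻¹ * x ∈ K := by
        show F ((F x)⁻¹ * x) = 1
        rw [hFmul, hFinv, Fidem, inv_mul_cancel]
      have hxr : F x ∈ R := ⟨x, rfl⟩
      have : x = F x * ((F x)⁻¹ * x) := by group
      rw [this]
      exact Subgroup.mul_mem _ (Subgroup.mem_sup_left hxr) (Subgroup.mem_sup_right hxk)
    rcases hind R K Rn Kn hinf hsup with hR | hK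
    · refine Or.inl ⟨m, fun x => ?_⟩
      have : F x ∈ R := ⟨x, rfl⟩
      rw [hR] at this
      simpa [Subgroup.mem_bot] using this
    · refine Or.inr ((Finite.injective_iff_bijective).mp ?_)
      intro x y hxy
      have hFxy : F x = F y := by
        have h1 : m - 1 + 1 = m := Nat.succ_pred_eq_of_pos hm1
        rw [hFdef, ← h1, Function.iterate_succ_apply, Function.iterate_succ_apply, hxy]
      have : x * y⁻¹ ∈ K := by
        show F (x * y⁻¹) = 1
        rw [hFmul, hFinv, hFxy, mul_inv_cancel]
      rw [hK, Subgroup.mem_bot] at this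
      exact mul_inv_eq_one.mp this

/-- Key lemma: the image under an automorphism of the (embedded) commutator subgroup of one
factor is contained in the embedded commutator subgroup of some factor. -/
private lemma key {n : ℕ} {G : Fin n → Type*} [∀ i, Group (G i)] [∀ i, Finite (G i)]
    (hind : ∀ i, ∀ H K : Subgroup (G i), H.Normal → K.Normal →
      H ⊓ K = ⊥ → H ⊔ K = ⊤ → H = ⊥ ∨ K = ⊥)
    (φ : ((i : Fin n) → G i) ≃* ((i : Fin n) → G i)) (k : Fin n) :
    ∃ i, (Subgroup.map (MonoidHom.mulSingle G i) (commutator (G i))) ≥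
      (Subgroup.map (MonoidHom.mulSingle G k) (commutator (G k))).map φ.toMonoidHom := by
  classical
  set Q : Fin n → Prop := fun i => ∃ a : G k, a ≠ 1 ∧ ∀ l, l ≠ i → φ (Pi.mulSingle k a) l = 1
    with hQdef
  -- at most one index satisfies Q
  have hQ : ∀ i j, i ≠ j → Q i → Q j → False := by
    rintro i j hij ⟨a, ha1, ha2⟩ ⟨b, hb1, hb2⟩
    set θ : G k →* G k :=
      (Pi.evalMonoidHom G k).comp (φ.symm.toMonoidHom.comp
        ((MonoidHom.mulSingle G i).comp ((Pi.evalMonoidHom G i).comp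
          (φ.toMonoidHom.comp (MonoidHom.mulSingle G k))))) with hθdef
    have hθ : ∀ x : G k, θ x = φ.symm (Pi.mulSingle i (φ (Pi.mulSingle k x) i)) k := by
      intro x; rfl
    have hnorm : ∀ x y : G k, θ (y * x * y⁻¹) = y * θ x * y⁻¹ := by
      intro x y
      have h1 : (Pi.mulSingle k (y * x * y⁻¹) : ∀ i, G i)
          = Pi.mulSingle k y * Pi.mulSingle k x * (Pi.mulSingle k y)⁻¹ := by
        funext l
        rcases eq_or_ne l k with rfl | hl
        · simp
        · simp [Pi.mulSingle_eq_of_ne hl]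
      rw [hθ, h1]
      set Y := φ (Pi.mulSingle k y) with hY
      set X := φ (Pi.mulSingle k x) with hX
      have h2 : φ (Pi.mulSingle k y * Pi.mulSingle k x * (Pi.mulSingle k y)⁻¹)
          = Y * X * Y⁻¹ := by
        rw [map_mul, map_mul, map_inv]
      rw [h2]
      have h3 : (Pi.mulSingle i ((Y * X * Y⁻¹) i) : ∀ i, G i)
          = Y * Pi.mulSingle i (X i) * Y⁻¹ := by
        rw [conj_mulSingle Y i (X i)]
        rfl
      rw [h3, map_mul, map_mul, map_inv, MulEquiv.symm_apply_apply]
      simp [Pi.mul_apply, Pi.inv_apply, Pi.mulSingle_eq_same, hθ]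
      rfl
    have hfix : θ a = a := by
      have hsupp : (Pi.mulSingle i (φ (Pi.mulSingle k a) i) : ∀ i, G i)
          = φ (Pi.mulSingle k a) := by
        funext l
        rcases eq_or_ne l i with rfl | hl
        · simp
        · rw [Pi.mulSingle_eq_of_ne hl, ha2 l hl]
      rw [hθ, hsupp, MulEquiv.symm_apply_apply, Pi.mulSingle_eq_same]
    have hkill : θ b = 1 := by
      have : φ (Pi.mulSingle k b) i = 1 := hb2 i hij
      rw [hθ, this]
      simp
    rcases fitting (hind k) θ hnorm with ⟨m, hm⟩ | hbij
    · have : (⇑θ)^[m] a = a := Function.iterate_fixed hfix m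
      rw [hm a] at this
      exact ha1 this.symm
    · exact hb1 (hbij.injective (by rw [hkill, map_one]))
  -- choose the target index
  have main : ∀ i : Fin n, (∀ j, j ≠ i → ¬ Q j) →
      (Subgroup.map (MonoidHom.mulSingle G k) (commutator (G k))).map φ.toMonoidHom
        ≤ Subgroup.map (MonoidHom.mulSingle G i) (commutator (G i)) := by
    intro i hni
    set Hs : Subgroup (∀ j, G j) :=
      (((⊤ : Subgroup (G k)).map (MonoidHom.mulSingle G k)).map φ.toMonoidHom) with hHsdef
    have hHsn : Hs.Normal := by
      refine Subgroup.Normal.map ?_ φ.toMonoidHom φ.surjective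
      constructor
      rintro x hx g
      simp only [Subgroup.mem_map, Subgroup.mem_top, true_and] at hx ⊢
      obtain ⟨c, rfl⟩ := hx
      refine ⟨g k * c * (g k)⁻¹, ?_⟩
      simpa using (conj_mulSingle g k c).symm
    have hDk : (Subgroup.map (MonoidHom.mulSingle G k) (commutator (G k))).map φ.toMonoidHom
        = ⁅Hs, Hs⁆ := by
      rw [commutator_def, Subgroup.map_commutator, Subgroup.map_commutator]
    rw [hDk]
    intro u hu
    -- coordinates other than i vanish on ⁅Hs, Hs⁆
    have hcoord : ∀ j, j ≠ i → u j = 1 := by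
      intro j hji
      have hle : ⁅Hs, Hs⁆ ≤ (Pi.evalMonoidHom G j).ker := by
        rw [Subgroup.commutator_le]
        intro h₁ hh₁ h₂ hh₂
        rw [MonoidHom.mem_ker]
        show ⁅h₁, h₂⁆ j = 1
        by_contra hc
        apply hni j hji
        have hcj : (⁅h₁, h₂⁆ : ∀ i, G i) j = ⁅h₁ j, h₂ j⁆ := rfl
        set c : G j := ⁅h₁ j, h₂ j⁆ with hc'
        have hcne : c ≠ 1 := by rw [hc'] ; rw [hcj] at hc ; exact hc
        set v : ∀ i, G i := Pi.mulSingle j (h₂ j) with hv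
        have hx : (⁅h₁, v⁆ : ∀ i, G i) = Pi.mulSingle j c := by
          funext l
          rcases eq_or_ne l j with rfl | hl
          · show ⁅h₁ l, (Pi.mulSingle l (h₂ l) : ∀ i, G i) l⁆
              = (Pi.mulSingle l c : ∀ i, G i) l
            rw [Pi.mulSingle_eq_same, Pi.mulSingle_eq_same]
          · show ⁅h₁ l, (Pi.mulSingle j (h₂ j) : ∀ i, G i) l⁆
              = (Pi.mulSingle j c : ∀ i, G i) l
            rw [Pi.mulSingle_eq_of_ne hl, Pi.mulSingle_eq_of_ne hl]
            simp
        have hmem : (⁅h₁, v⁆ : ∀ i, G i) ∈ Hs := by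
          have h1 : (⁅h₁, v⁆ : ∀ i, G i) = h₁ * (v * h₁⁻¹ * v⁻¹) := by
            rw [commutatorElement_def]; group
          rw [h1]
          exact Hs.mul_mem hh₁ (hHsn.conj_mem h₁⁻¹ (Hs.inv_mem hh₁) v)
        rw [hx] at hmem
        simp only [hHsdef, Subgroup.mem_map, Subgroup.mem_top, true_and] at hmem
        obtain ⟨w, ⟨a, rfl⟩, hw⟩ := hmem
        refine ⟨a, ?_, ?_⟩
        · rintro rfl
          apply hcne
          have : φ ((MonoidHom.mulSingle G k) 1) = Pi.mulSingle j c := hw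
          rw [map_one, map_one] at this
          have := congrFun this j
          rw [Pi.mulSingle_eq_same] at this
          exact this.symm ▸ (Pi.one_apply j)
        · intro l hl
          have : φ ((MonoidHom.mulSingle G k) a) = Pi.mulSingle j c := hw
          have h2 : (MonoidHom.mulSingle G k) a = Pi.mulSingle k a := rfl
          rw [h2] at this
          rw [this, Pi.mulSingle_eq_of_ne hl]
      have := hle hu
      rw [MonoidHom.mem_ker] at this
      exact this
    -- the i-th coordinate lies in the commutator subgroup
    have hui : u i ∈ commutator (G i) := by
      have hle : Subgroup.map (Pi.evalMonoidHom G i) ⁅Hs, Hs⁆ ≤ commutator (G i) := by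
        rw [Subgroup.map_commutator, commutator_def]
        exact Subgroup.commutator_mono le_top le_top
      exact hle ⟨u, hu, rfl⟩
    have hu' : u = Pi.mulSingle i (u i) := by
      funext l
      rcases eq_or_ne l i with rfl | hl
      · rw [Pi.mulSingle_eq_same]
      · rw [Pi.mulSingle_eq_of_ne hl, hcoord l hl]
    exact ⟨u i, hui, hu'.symm⟩
  by_cases hq : ∃ i, Q i
  · obtain ⟨i, hi⟩ := hq
    exact ⟨i, main i (fun j hji hQj => hQ j i hji hQj hi)⟩
  · push_neg at hq
    exact ⟨k, main k (fun j _ => hq j)⟩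

/-- Any automorphism of a direct product of finitely many indecomposable finite groups
permutes the commutator subgroups of the factors. -/
theorem stmt_1 (n : ℕ) (G : Fin n → Type*) [∀ i, Group (G i)] [∀ i, Finite (G i)]
    (hind : ∀ i, ∀ H K : Subgroup (G i), H.Normal → K.Normal →
      H ⊓ K = ⊥ → H ⊔ K = ⊤ → H = ⊥ ∨ K = ⊥)
    (φ : ((i : Fin n) → G i) ≃* ((i : Fin n) → G i)) :
    ∃ σ : Equiv.Perm (Fin n), ∀ i,
      (Subgroup.map (MonoidHom.mulSingle G i) (commutator (G i))).map φ.toMonoidHom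
        = Subgroup.map (MonoidHom.mulSingle G (σ i)) (commutator (G (σ i))) := by
  classical
  set D : Fin n → Subgroup (∀ i, G i) :=
    fun i => Subgroup.map (MonoidHom.mulSingle G i) (commutator (G i)) with hDdef
  -- choice functions from the key lemma
  choose α hα using key hind φ
  choose β hβ using key hind φ.symm
  -- basic facts
  have hcomp : ∀ (S : Subgroup (∀ i, G i)),
      (S.map φ.toMonoidHom).map φ.symm.toMonoidHom = S := by
    intro S
    rw [Subgroup.map_map]
    have : φ.symm.toMonoidHom.comp φ.toMonoidHom = MonoidHom.id _ := by
      ext x; simp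
    rw [this, Subgroup.map_id]
  have hcomp' : ∀ (S : Subgroup (∀ i, G i)),
      (S.map φ.symm.toMonoidHom).map φ.toMonoidHom = S := by
    intro S
    rw [Subgroup.map_map]
    have : φ.toMonoidHom.comp φ.symm.toMonoidHom = MonoidHom.id _ := by
      ext x; simp
    rw [this, Subgroup.map_id]
  have hmono : ∀ k l, D k ≤ D l → D k ≠ ⊥ → k = l := by
    intro k l hle hne
    by_contra hkl
    apply hne
    rw [eq_bot_iff]
    intro x hx
    obtain ⟨c, hc, rfl⟩ := hx
    obtain ⟨d, hd, hdx⟩ := hle ⟨c, hc, rfl⟩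
    have h1 : (MonoidHom.mulSingle G k) c = Pi.mulSingle k c := rfl
    have h2 : (MonoidHom.mulSingle G l) d = Pi.mulSingle l d := rfl
    rw [h1] at hdx ⊢
    rw [h2] at hdx
    have hck : c = 1 := by
      have := congrFun hdx k
      rw [Pi.mulSingle_eq_same, Pi.mulSingle_eq_of_ne (Ne.symm (Ne.symm hkl))] at this
      · exact this.symm
    rw [hck]
    simp [Subgroup.mem_bot]
  have hmapbot : ∀ k, (D k).map φ.toMonoidHom = ⊥ ↔ D k = ⊥ := by
    intro k
    constructor
    · intro h
      rw [← hcomp (D k), h, Subgroup.map_bot]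
    · intro h
      rw [h, Subgroup.map_bot]
  -- for k with D k ≠ ⊥ we get equality
  have hkey : ∀ k, D k ≠ ⊥ → (D k).map φ.toMonoidHom = D (α k) ∧ D (α k) ≠ ⊥ ∧ β (α k) = k := by
    intro k hk
    have e1 : (D k).map φ.toMonoidHom ≤ D (α k) := hα k
    have hαne : D (α k) ≠ ⊥ := by
      intro h
      rw [h, le_bot_iff, hmapbot k] at e1
      exact hk e1
    have e2 : (D (α k)).map φ.symm.toMonoidHom ≤ D (β (α k)) := hβ (α k)
    have e3 : D k ≤ D (β (α k)) := by
      calc D k = ((D k).map φ.toMonoidHom).map φ.symm.toMonoidHom := (hcomp _).symm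
      _ ≤ (D (α k)).map φ.symm.toMonoidHom := Subgroup.map_mono e1
      _ ≤ D (β (α k)) := e2
    have hβα : β (α k) = k := (hmono k (β (α k)) e3 hk).symm
    have e4 : D k ≤ (D (α k)).map φ.symm.toMonoidHom := by
      calc D k = ((D k).map φ.toMonoidHom).map φ.symm.toMonoidHom := (hcomp _).symm
      _ ≤ (D (α k)).map φ.symm.toMonoidHom := Subgroup.map_mono e1
    have e5 : (D (α k)).map φ.symm.toMonoidHom = D k := by
      refine le_antisymm ?_ e4
      calc (D (α k)).map φ.symm.toMonoidHom ≤ D (β (α k)) := e2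
      _ = D k := by rw [hβα]
    have e6 : (D k).map φ.toMonoidHom = D (α k) := by
      rw [← e5, hcomp']
    exact ⟨e6, hαne, hβα⟩
  -- build the permutation
  set σf : Fin n → Fin n := fun k => if D k = ⊥ then k else α k with hσfdef
  have hinj : Function.Injective σf := by
    intro k l h
    have hk' : σf k = if D k = ⊥ then k else α k := rfl
    have hl' : σf l = if D l = ⊥ then l else α l := rfl
    rw [hk', hl'] at h
    by_cases hk : D k = ⊥ <;> by_cases hl : D l = ⊥
    · rw [if_pos hk, if_pos hl] at h; exact h
    · rw [if_pos hk, if_neg hl] at h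
      exfalso
      obtain ⟨-, hαne, -⟩ := hkey l hl
      rw [← h] at hαne; exact hαne hk
    · rw [if_neg hk, if_pos hl] at h
      exfalso
      obtain ⟨-, hαne, -⟩ := hkey k hk
      rw [h] at hαne; exact hαne hl
    · rw [if_neg hk, if_neg hl] at h
      obtain ⟨-, -, hβαk⟩ := hkey k hk
      obtain ⟨-, -, hβαl⟩ := hkey l hl
      rw [← hβαk, ← hβαl, h]
  refine ⟨Equiv.ofBijective σf ((Finite.injective_iff_bijective).mp hinj), ?_⟩
  intro i
  show (D i).map φ.toMonoidHom = D (σf i)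
  by_cases hi : D i = ⊥
  · have hσ : σf i = i := by
      show (if D i = ⊥ then i else α i) = i
      rw [if_pos hi]
    rw [hσ, hi, Subgroup.map_bot]
  · have hσ : σf i = α i := by
      show (if D i = ⊥ then i else α i) = α i
      rw [if_neg hi]
    rw [hσ]
    exact (hkey i hi).1
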